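/- For positive integers k and r, let P_k^r denote the probability that 2^r independent random binary search trees with k leaves are pairwise isomorphic, and let δ(k) = 1 if k is even and δ(k) = 0 otherwise. Then P_k^r = 1 for k ∈ {1, 2, 3} and every r, and for every k ≥ 4 and every r, P_k^r = Σ_{i=1}^{⌊(k−1)/2⌋} (2/(k−1))^{2^r}·P_i^r·P_{k−i}^r + δ(k)·(1/(k−1))^{2^r}·(2^{2^r−1}·(P_{k/2}^r)² − (2^{2^r−1}−1)·P_{k/2}^{r+1}). -/

import Mathlib

open Filter Finset
open scoped Classical

/-- Ordered binary trees: every node has exactly two or no children. -/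
inductive BT : Type
  | leaf : BT
  | node : BT → BT → BT
deriving DecidableEq

namespace BT

/-- The size of a binary tree: its number of leaves. -/
def size : BT → ℕ
  | leaf => 1
  | node l r => size l + size r

/-- The multiset of all fringe subtrees of a tree (one for every node). -/
def fringe : BT → Multiset BT
  | leaf => {leaf}
  | node l r => node l r ::ₘ (fringe l + fringe r)

/-- The finset of all ordered binary trees with `n` leaves. -/
def treesOfSize : ℕ → Finset BT
  | 0 => ∅
  | 1 => {leaf}
  | n + 2 =>
    (Finset.range (n + 1)).attach.biUnion fun k =>
      ((treesOfSize (k.1 + 1)) ×ˢ (treesOfSize (n + 1 - k.1))).image fun p => node p.1 p.2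
  decreasing_by
    · have := Finset.mem_range.mp k.2; omega
    · omega

/-- Boolean test whether two ordered binary trees are isomorphic as unordered trees. -/
def isoB : BT → BT → Bool
  | leaf, leaf => true
  | leaf, node _ _ => false
  | node _ _, leaf => false
  | node l1 r1, node l2 r2 => (isoB l1 l2 && isoB r1 r2) || (isoB l1 r2 && isoB r1 l2)

/-- An injective encoding of ordered binary trees into the natural numbers. -/
def encode : BT → ℕ
  | leaf => 0
  | node l r => Nat.pair (encode l) (encode r) + 1

/-- The canonical representative of the isomorphism class of a binary tree:
two trees are isomorphic (equal as unordered trees) iff their canonical forms agree. -/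
def canon : BT → BT
  | leaf => leaf
  | node l r =>
    let l' := canon l
    let r' := canon r
    if encode l' ≤ encode r' then node l' r' else node r' l'

/-- Number of isomorphism classes of unordered binary trees represented among
the fringe subtrees of `t`. -/
def isoClasses (t : BT) : ℕ := ((fringe t).toFinset.image canon).card

/-- Number of distinct ordered binary trees occurring among the fringe subtrees of `t`. -/
def numDistinct (t : BT) : ℕ := (fringe t).toFinset.card

/-- The probability of a tree under the binary search tree model. -/
noncomputable def pbst (t : BT) : ℝ :=
  ((fringe t).map fun s => if 1 < size s then (1 : ℝ) / ((size s : ℝ) - 1) else 1).prod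

/-- Expectation of `f` under the uniform distribution on trees with `n` leaves. -/
noncomputable def unifE (n : ℕ) (f : BT → ℝ) : ℝ :=
  (∑ t ∈ treesOfSize n, f t) / (treesOfSize n).card

/-- Probability of an event under the uniform distribution on trees with `n` leaves. -/
noncomputable def unifP (n : ℕ) (p : BT → Prop) : ℝ :=
  ((treesOfSize n).filter p).card / (treesOfSize n).card

/-- Expectation of `f` under the binary search tree distribution on trees with `n` leaves. -/
noncomputable def bstE (n : ℕ) (f : BT → ℝ) : ℝ :=
  ∑ t ∈ treesOfSize n, pbst t * f t

/-- Probability of an event under the binary search tree distribution on trees with `n` leaves. -/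
noncomputable def bstP (n : ℕ) (p : BT → Prop) : ℝ :=
  ∑ t ∈ (treesOfSize n).filter p, pbst t

end BT

namespace BT

/-- `P_k^r`: the probability that `2^r` independent random binary search trees with `k`
leaves are pairwise isomorphic. -/
noncomputable def PisoPow (k r : ℕ) : ℝ :=
  ∑ f ∈ Fintype.piFinset (fun _ : Fin (2 ^ r) => treesOfSize k),
    (∏ i, pbst (f i)) * (if ∀ i j, isoB (f i) (f j) then 1 else 0)

end BT

namespace BT

lemma size_pos (t : BT) : 1 ≤ t.size := by
  induction t with
  | leaf => simp [size]
  | node l r ihl ihr => simp [size]; omega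

lemma mem_treesOfSize : ∀ (n : ℕ) (t : BT), t ∈ treesOfSize n ↔ t.size = n := by
  intro n
  induction n using Nat.strong_induction_on with
  | _ n ih =>
    match n with
    | 0 =>
      intro t
      simp only [treesOfSize]
      constructor
      · simp
      · intro h; have := size_pos t; omega
    | 1 =>
      intro t
      simp only [treesOfSize, Finset.mem_singleton]
      constructor
      · rintro rfl; rfl
      · intro h
        cases t with
        | leaf => rfl
        | node l r =>
          have hl := size_pos l; have hr := size_pos r
          simp [size] at h; omega
    | m + 2 =>
      intro t
      simp only [treesOfSize, Finset.mem_biUnion, Finset.mem_attach, Finset.mem_image,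
        Finset.mem_product, true_and]
      constructor
      · rintro ⟨⟨k, hk⟩, ⟨l, r⟩, ⟨hl, hr⟩, rfl⟩
        have hk' := Finset.mem_range.mp hk
        have h1 := (ih (k + 1) (by omega) l).mp hl
        have h2 := (ih (m + 1 - k) (by omega) r).mp hr
        simp [size, h1, h2]; omega
      · intro h
        cases t with
        | leaf => simp [size] at h
        | node l r =>
          have hl := size_pos l; have hr := size_pos r
          simp only [size] at h
          refine ⟨⟨l.size - 1, Finset.mem_range.mpr (by omega)⟩, ⟨l, r⟩, ⟨?_, ?_⟩, rfl⟩
          · exact (ih (l.size - 1 + 1) (by omega) l).mpr (by omega)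
          · exact (ih (m + 1 - (l.size - 1)) (by omega) r).mpr (by omega)

lemma pbst_leaf : pbst leaf = 1 := by
  simp [pbst, fringe, size]

lemma pbst_node (l r : BT) :
    pbst (node l r) = 1 / ((l.size + r.size : ℝ) - 1) * (pbst l * pbst r) := by
  have h : 1 < size (node l r) := by
    have := size_pos l; have := size_pos r; simp [size]; omega
  simp only [pbst, fringe, Multiset.map_cons, Multiset.prod_cons, Multiset.map_add,
    Multiset.prod_add, if_pos h]
  simp [size]

lemma sum_treesOfSize_succ_succ (m : ℕ) (F : BT → ℝ) :
    ∑ t ∈ treesOfSize (m + 2), F t =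
      ∑ a ∈ Finset.Icc 1 (m + 1), ∑ l ∈ treesOfSize a,
        ∑ r ∈ treesOfSize (m + 2 - a), F (node l r) := by
  rw [show treesOfSize (m+2) = (Finset.range (m + 1)).attach.biUnion fun k =>
      ((treesOfSize (k.1 + 1)) ×ˢ (treesOfSize (m + 1 - k.1))).image fun p => node p.1 p.2
    from by rw [treesOfSize]]
  rw [Finset.sum_biUnion]
  · rw [← Finset.sum_attach (Finset.Icc 1 (m+1)) (fun a => ∑ l ∈ treesOfSize a,
        ∑ r ∈ treesOfSize (m + 2 - a), F (node l r))]
    refine Finset.sum_nbij' (fun k => ⟨k.1 + 1, by have := Finset.mem_range.mp k.2; simp; omega⟩)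
      (fun a => ⟨a.1 - 1, by have := Finset.mem_Icc.mp a.2; simp; omega⟩) ?_ ?_ ?_ ?_ ?_
    · intros; exact Finset.mem_attach _ _
    · intros; exact Finset.mem_attach _ _
    · intro k _; ext; simp
    · intro a _; have := Finset.mem_Icc.mp a.2; ext; simp; omega
    · intro k _
      rw [Finset.sum_image, Finset.sum_product]
      · have := Finset.mem_range.mp k.2
        have : m + 1 - k.1 = m + 2 - (k.1 + 1) := by omega
        rw [this]
      · rintro ⟨a, b⟩ - ⟨c, d⟩ - h
        simpa using h
  · -- pairwise disjoint
    intro x _ y _ hxy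
    simp only [Finset.disjoint_left]
    intro t ht ht'
    simp only [Finset.mem_image, Finset.mem_product] at ht ht'
    obtain ⟨⟨a, b⟩, ⟨ha, hb⟩, rfl⟩ := ht
    obtain ⟨⟨c, d⟩, ⟨hc, hd⟩, heq⟩ := ht'
    have h1 := (mem_treesOfSize _ a).mp ha
    have h2 := (mem_treesOfSize _ c).mp hc
    injection heq with e1 e2
    have h3 : c.size = a.size := congrArg size e1
    exact hxy (Subtype.ext (by omega))

lemma encode_injective : Function.Injective encode := by
  intro s
  induction s with
  | leaf => intro t h; cases t with
    | leaf => rfl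
    | node l r => simp [encode] at h
  | node l r ihl ihr =>
    intro t h
    cases t with
    | leaf => simp [encode] at h
    | node l' r' =>
      simp only [encode, Nat.add_right_cancel_iff] at h
      have := Nat.pair_eq_pair.mp h
      rw [ihl this.1, ihr this.2]

lemma size_canon (t : BT) : (canon t).size = t.size := by
  induction t with
  | leaf => rfl
  | node l r ihl ihr =>
    simp only [canon]
    split <;> simp [size, ihl, ihr] <;> omega

/-- sorted-pair equality characterization -/
lemma sp_eq {a b c d : BT} :
    (if encode a ≤ encode b then node a b else node b a) =
      (if encode c ≤ encode d then node c d else node d c) ↔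
    (a = c ∧ b = d) ∨ (a = d ∧ b = c) := by
  constructor
  · intro h
    split at h <;> split at h <;>
      · injection h with h1 h2; subst h1; subst h2; tauto
  · rintro (⟨rfl, rfl⟩ | ⟨rfl, rfl⟩)
    · rfl
    · rcases le_or_gt (encode a) (encode b) with h | h
      · rcases le_or_gt (encode b) (encode a) with h' | h'
        · have : a = b := encode_injective (le_antisymm h h')
          subst this; simp
        · rw [if_pos h, if_neg (by omega)]
      · rw [if_neg (by omega), if_pos h.le]

lemma isCanon_canon (t : BT) : canon (canon t) = canon t := by
  induction t with
  | leaf => rfl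
  | node l r ihl ihr =>
    simp only [canon]
    split
    case isTrue h => simp only [canon, ihl, ihr]; rw [if_pos h]
    case isFalse h => simp only [canon, ihl, ihr]; rw [if_pos (by omega)]

lemma isoB_iff_canon : ∀ s t : BT, isoB s t = true ↔ canon s = canon t := by
  intro s
  induction s with
  | leaf =>
    intro t; cases t with
    | leaf => simp [isoB]
    | node l r =>
      simp only [isoB, canon]
      constructor
      · simp
      · intro h; split at h <;> exact absurd h (by simp)
  | node l r ihl ihr =>
    intro t; cases t with
    | leaf =>
      simp only [isoB, canon]
      constructor
      · simp
      · intro h; split at h <;> exact absurd h (by simp)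
    | node l' r' =>
      simp only [isoB, Bool.or_eq_true, Bool.and_eq_true, ihl, ihr]
      show _ ↔ (if _ then node (canon l) (canon r) else node (canon r) (canon l)) =
        (if _ then node (canon l') (canon r') else node (canon r') (canon l'))
      rw [sp_eq]

/-- probability weight of a canonical class -/
noncomputable def Q (k : ℕ) (c : BT) : ℝ :=
  ∑ t ∈ (treesOfSize k).filter (fun t => canon t = c), pbst t

/-- finset of canonical class representatives -/
noncomputable def Cl (k : ℕ) : Finset BT := (treesOfSize k).image canon

noncomputable def R (k N : ℕ) : ℝ := ∑ c ∈ Cl k, (Q k c) ^ N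

lemma PisoPow_eq_R (k r : ℕ) : PisoPow k r = R k (2 ^ r) := by
  have hN : 0 < 2 ^ r := Nat.pow_pos (by norm_num)
  rw [PisoPow]
  have step1 : ∀ f ∈ Fintype.piFinset (fun _ : Fin (2 ^ r) => treesOfSize k),
      (if ∀ i j, isoB (f i) (f j) then (1:ℝ) else 0) =
      ∑ c ∈ Cl k, ∏ i, (if canon (f i) = c then (1:ℝ) else 0) := by
    intro f hf
    have hmem : ∀ i, f i ∈ treesOfSize k := by
      intro i; exact Fintype.mem_piFinset.mp hf i
    have hprod : ∀ c, (∏ i, (if canon (f i) = c then (1:ℝ) else 0)) =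
        if ∀ i, canon (f i) = c then (1:ℝ) else 0 := by
      intro c
      rw [Finset.prod_boole]
      simp
    simp only [hprod]
    by_cases h : ∀ i j, isoB (f i) (f j)
    · rw [if_pos h]
      have hall : ∀ i, canon (f i) = canon (f ⟨0, hN⟩) :=
        fun i => (isoB_iff_canon _ _).mp (h i ⟨0, hN⟩)
      have : ∀ c ∈ Cl k, (if ∀ i, canon (f i) = c then (1:ℝ) else 0) =
          if c = canon (f ⟨0, hN⟩) then 1 else 0 := by
        intro c _
        congr 1
        simp only [eq_iff_iff]
        constructor
        · intro hc; rw [← hc ⟨0, hN⟩]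
        · intro hc i; rw [hall i, ← hc]
      rw [Finset.sum_congr rfl this, Finset.sum_ite_eq' (Cl k)]
      exact (if_pos (Finset.mem_image_of_mem canon (hmem ⟨0, hN⟩))).symm
    · rw [if_neg h]
      push_neg at h
      obtain ⟨i, j, hij⟩ := h
      have hne : canon (f i) ≠ canon (f j) := by
        intro hc
        exact hij (by simpa using (isoB_iff_canon (f i) (f j)).mpr hc)
      symm
      refine Finset.sum_eq_zero fun c _ => ?_
      rw [if_neg]
      intro hc
      exact hne ((hc i).trans (hc j).symm)
  rw [Finset.sum_congr rfl (fun f hf => by rw [step1 f hf])]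
  rw [Finset.sum_congr rfl (fun f _ => Finset.mul_sum _ _ _), Finset.sum_comm]
  have factor : ∀ c, ∑ f ∈ Fintype.piFinset (fun _ : Fin (2 ^ r) => treesOfSize k),
      (∏ i, pbst (f i)) * ∏ i, (if canon (f i) = c then (1:ℝ) else 0) = (Q k c) ^ (2 ^ r) := by
    intro c
    have : ∀ f : Fin (2^r) → BT, (∏ i, pbst (f i)) * ∏ i, (if canon (f i) = c then (1:ℝ) else 0)
        = ∏ i, (pbst (f i) * if canon (f i) = c then (1:ℝ) else 0) := by
      intro f; rw [Finset.prod_mul_distrib]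
    simp only [this]
    rw [← Finset.prod_univ_sum (fun _ : Fin (2^r) => treesOfSize k) (fun _ t => pbst t * if canon t = c then (1:ℝ) else 0)]
    rw [Finset.prod_congr rfl (fun i _ => ?_)]
    · rw [Finset.prod_const, Finset.card_univ, Fintype.card_fin]
    · rw [Q, Finset.sum_filter]
      exact Finset.sum_congr rfl fun t _ => by split <;> simp
  rw [R]
  exact Finset.sum_congr rfl fun c _ => factor c

lemma sum_pbst : ∀ n : ℕ, 1 ≤ n → ∑ t ∈ treesOfSize n, pbst t = 1 := by
  intro n
  induction n using Nat.strong_induction_on with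
  | _ n ih =>
    match n with
    | 0 => intro h; exact absurd h (by norm_num)
    | 1 => intro _; simp [treesOfSize, pbst_leaf]
    | m + 2 =>
      intro _
      rw [sum_treesOfSize_succ_succ]
      have : ∀ a ∈ Finset.Icc 1 (m + 1),
          (∑ l ∈ treesOfSize a, ∑ r ∈ treesOfSize (m + 2 - a), pbst (node l r))
          = 1 / (m + 1 : ℝ) := by
        intro a ha
        have ha' := Finset.mem_Icc.mp ha
        have key : ∀ l ∈ treesOfSize a, ∀ r ∈ treesOfSize (m + 2 - a),
            pbst (node l r) = 1 / (m + 1 : ℝ) * (pbst l * pbst r) := by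
          intro l hl r hr
          have h1 := (mem_treesOfSize a l).mp hl
          have h2 := (mem_treesOfSize (m + 2 - a) r).mp hr
          rw [pbst_node, h1, h2]
          congr 2
          rw [show ((a:ℝ) + ((m + 2 - a : ℕ) : ℝ)) = ((m + 2 : ℕ) : ℝ) from by
            exact_mod_cast congrArg (Nat.cast : ℕ → ℝ) (show a + (m+2-a) = m+2 by omega)]
          push_cast; ring
        calc ∑ l ∈ treesOfSize a, ∑ r ∈ treesOfSize (m + 2 - a), pbst (node l r)
            = ∑ l ∈ treesOfSize a, ∑ r ∈ treesOfSize (m + 2 - a),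
              1 / (m + 1 : ℝ) * (pbst l * pbst r) := by
              refine Finset.sum_congr rfl fun l hl => Finset.sum_congr rfl fun r hr => ?_
              exact key l hl r hr
          _ = 1 / (m + 1 : ℝ) * ((∑ l ∈ treesOfSize a, pbst l) *
              (∑ r ∈ treesOfSize (m + 2 - a), pbst r)) := by
              rw [Finset.sum_mul_sum]
              rw [Finset.mul_sum]
              exact Finset.sum_congr rfl fun l _ => by rw [Finset.mul_sum]
          _ = 1 / (m + 1 : ℝ) := by
              rw [ih a (by omega) (by omega), ih (m + 2 - a) (by omega) (by omega)]
              ring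
      rw [Finset.sum_congr rfl this, Finset.sum_const, Nat.card_Icc]
      simp
      field_simp

/-- all trees with equal size ≤ 3 are isomorphic -/
lemma isoB_of_small : ∀ s t : BT, s.size = t.size → s.size ≤ 3 → isoB s t = true := by
  have hsz : ∀ u : BT, ∀ l r : BT, u = node l r → 2 ≤ u.size := by
    rintro u l r rfl; have := size_pos l; have := size_pos r; simp [size]; omega
  intro s t h hle
  match s, t with
  | leaf, leaf => rfl
  | leaf, node l r =>
    exfalso; have := size_pos l; have := size_pos r; simp [size] at h; omega
  | node l r, leaf =>
    exfalso; have := size_pos l; have := size_pos r; simp [size] at h; omega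
  | node l1 r1, node l2 r2 =>
    have h1 := size_pos l1; have h2 := size_pos r1
    have h3 := size_pos l2; have h4 := size_pos r2
    simp only [size] at h hle
    -- sizes: total ≤ 3 so each subtree has size ≤ 2; size-1 = leaf, size-2 = node leaf leaf
    have leaf_of : ∀ u : BT, u.size = 1 → u = leaf := by
      intro u hu
      cases u with
      | leaf => rfl
      | node a b => have := size_pos a; have := size_pos b; simp [size] at hu; omega
    have node_of : ∀ u : BT, u.size = 2 → u = node leaf leaf := by
      intro u hu
      cases u with
      | leaf => simp [size] at hu
      | node a b =>
        have ha := size_pos a; have hb := size_pos b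
        simp only [size] at hu
        rw [leaf_of a (by omega), leaf_of b (by omega)]
    -- case analysis on sizes
    rcases Nat.lt_or_ge (l1.size) 2 with hl1 | hl1
    all_goals rcases Nat.lt_or_ge (l2.size) 2 with hl2 | hl2
    · -- both left leaves
      rw [leaf_of l1 (by omega), leaf_of l2 (by omega)]
      have : r1.size = r2.size := by omega
      rcases Nat.lt_or_ge (r1.size) 2 with hr | hr
      · rw [leaf_of r1 (by omega), leaf_of r2 (by omega)]; rfl
      · rw [node_of r1 (by omega), node_of r2 (by omega)]; rfl
    · -- l1 leaf, l2 node: then r2 leaf (size ≤ 3)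
      rw [leaf_of l1 (by omega), leaf_of r2 (by omega), node_of l2 (by omega),
        node_of r1 (by omega)]
      rfl
    · rw [leaf_of l2 (by omega), leaf_of r1 (by omega), node_of l1 (by omega),
        node_of r2 (by omega)]
      rfl
    · rw [node_of l1 (by omega), node_of l2 (by omega), leaf_of r1 (by omega),
        leaf_of r2 (by omega)]
      rfl

lemma PisoPow_small (k r : ℕ) (h1 : 1 ≤ k) (h3 : k ≤ 3) : PisoPow k r = 1 := by
  rw [PisoPow]
  have : ∀ f ∈ Fintype.piFinset (fun _ : Fin (2 ^ r) => treesOfSize k),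
      (∏ i, pbst (f i)) * (if ∀ i j, isoB (f i) (f j) then (1:ℝ) else 0) = ∏ i, pbst (f i) := by
    intro f hf
    rw [if_pos, mul_one]
    intro i j
    have hi := (mem_treesOfSize k (f i)).mp (Fintype.mem_piFinset.mp hf i)
    have hj := (mem_treesOfSize k (f j)).mp (Fintype.mem_piFinset.mp hf j)
    exact isoB_of_small _ _ (by omega) (by omega)
  rw [Finset.sum_congr rfl this, ← Finset.prod_univ_sum]
  rw [Finset.prod_congr rfl fun i _ => sum_pbst k h1]
  simp

lemma size_of_mem_Cl {a : ℕ} {x : BT} (h : x ∈ Cl a) : x.size = a := by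
  obtain ⟨t, ht, rfl⟩ := Finset.mem_image.mp h
  rw [size_canon]; exact (mem_treesOfSize a t).mp ht

lemma canon_of_mem_Cl {a : ℕ} {x : BT} (h : x ∈ Cl a) : canon x = x := by
  obtain ⟨t, _, rfl⟩ := Finset.mem_image.mp h
  exact isCanon_canon t

lemma self_mem_treesOfSize (t : BT) : t ∈ treesOfSize t.size :=
  (mem_treesOfSize t.size t).mpr rfl

/-- the structure of canonical classes of composite size -/
lemma Cl_succ_succ (m : ℕ) : Cl (m + 2) =
    ((Finset.Icc 1 (m + 1)).biUnion fun a =>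
      ((Cl a ×ˢ Cl (m + 2 - a)).filter fun p => encode p.1 ≤ encode p.2)).image
      fun p => node p.1 p.2 := by
  ext c
  constructor
  · intro hc
    obtain ⟨t, ht, rfl⟩ := Finset.mem_image.mp hc
    have hts := (mem_treesOfSize _ t).mp ht
    cases t with
    | leaf => simp [size] at hts
    | node l r =>
      have hl := size_pos l; have hr := size_pos r
      simp only [size] at hts
      rw [Finset.mem_image]
      have hcan : canon (node l r) = if encode (canon l) ≤ encode (canon r) then
          node (canon l) (canon r) else node (canon r) (canon l) := rfl
      rcases le_or_gt (encode (canon l)) (encode (canon r)) with h | h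
      · refine ⟨(canon l, canon r), Finset.mem_biUnion.mpr ⟨l.size, Finset.mem_Icc.mpr
          ⟨by omega, by omega⟩, Finset.mem_filter.mpr ⟨Finset.mem_product.mpr ⟨?_, ?_⟩, h⟩⟩, ?_⟩
        · exact Finset.mem_image_of_mem canon (self_mem_treesOfSize l)
        · rw [show m + 2 - l.size = r.size by omega]
          exact Finset.mem_image_of_mem canon (self_mem_treesOfSize r)
        · rw [hcan, if_pos h]
      · refine ⟨(canon r, canon l), Finset.mem_biUnion.mpr ⟨r.size, Finset.mem_Icc.mpr
          ⟨by omega, by omega⟩, Finset.mem_filter.mpr ⟨Finset.mem_product.mpr ⟨?_, ?_⟩, h.le⟩⟩, ?_⟩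
        · exact Finset.mem_image_of_mem canon (self_mem_treesOfSize r)
        · rw [show m + 2 - r.size = l.size by omega]
          exact Finset.mem_image_of_mem canon (self_mem_treesOfSize l)
        · rw [hcan, if_neg (by omega)]
  · intro hc
    obtain ⟨p, hp, rfl⟩ := Finset.mem_image.mp hc
    obtain ⟨a, ha, hpf⟩ := Finset.mem_biUnion.mp hp
    obtain ⟨hprod, hle⟩ := Finset.mem_filter.mp hpf
    obtain ⟨hx, hy⟩ := Finset.mem_product.mp hprod
    obtain ⟨ha1, ha2⟩ := Finset.mem_Icc.mp ha
    obtain ⟨tx, htx, hcx⟩ := Finset.mem_image.mp hx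
    obtain ⟨ty, hty, hcy⟩ := Finset.mem_image.mp hy
    have h1 := (mem_treesOfSize _ tx).mp htx
    have h2 := (mem_treesOfSize _ ty).mp hty
    refine Finset.mem_image.mpr ⟨node tx ty, ?_, ?_⟩
    · rw [mem_treesOfSize]
      simp only [size]; omega
    · show (if encode (canon tx) ≤ encode (canon ty) then
        node (canon tx) (canon ty) else node (canon ty) (canon tx)) = _
      rw [hcx, hcy, if_pos hle]

lemma W_eq_Q (b : ℕ) (x : BT) :
    ∑ l ∈ treesOfSize b, pbst l * (if canon l = x then (1:ℝ) else 0) = Q b x := by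
  rw [Q, Finset.sum_filter]
  exact Finset.sum_congr rfl fun t _ => by split <;> simp

lemma W_eq_zero {b : ℕ} {x : BT} (h : x.size ≠ b) :
    ∑ l ∈ treesOfSize b, pbst l * (if canon l = x then (1:ℝ) else 0) = 0 := by
  refine Finset.sum_eq_zero fun l hl => ?_
  rw [if_neg, mul_zero]
  intro hc
  have := size_canon l
  rw [hc] at this
  exact h (this.symm ▸ ((mem_treesOfSize b l).mp hl) ▸ this ▸ rfl)

/-- the Q-value of a composite class -/
lemma Q_node (m : ℕ) (x y : BT) (hx : canon x = x) (hy : canon y = y)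
    (hxy : encode x ≤ encode y) (ha1 : 1 ≤ x.size) (ha2 : x.size ≤ m + 1)
    (hsum : x.size + y.size = m + 2) :
    Q (m + 2) (node x y) =
      (if x = y then (1:ℝ) else 2) / (m + 1 : ℝ) * (Q x.size x * Q y.size y) := by
  have hy1 : 1 ≤ y.size := size_pos y
  have hcan : ∀ l r : BT, canon (node l r) = if encode (canon l) ≤ encode (canon r) then
      node (canon l) (canon r) else node (canon r) (canon l) := fun _ _ => rfl
  have hnxy : node x y = if encode x ≤ encode y then node x y else node y x := (if_pos hxy).symm
  have hiff : ∀ l r : BT, canon (node l r) = node x y ↔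
      (canon l = x ∧ canon r = y) ∨ (canon l = y ∧ canon r = x) := by
    intro l r
    rw [hcan, hnxy]
    exact sp_eq
  have hpb : ∀ b, b ∈ Finset.Icc 1 (m+1) → ∀ l ∈ treesOfSize b, ∀ r ∈ treesOfSize (m + 2 - b),
      pbst (node l r) = 1 / (m + 1 : ℝ) * (pbst l * pbst r) := by
    intro b hb l hl r hr
    have hb' := Finset.mem_Icc.mp hb
    have h1 := (mem_treesOfSize _ l).mp hl
    have h2 := (mem_treesOfSize _ r).mp hr
    rw [pbst_node, h1, h2]
    congr 2
    rw [show ((b:ℝ) + ((m + 2 - b : ℕ) : ℝ)) = ((m + 2 : ℕ) : ℝ) from by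
      exact_mod_cast congrArg (Nat.cast : ℕ → ℝ) (show b + (m+2-b) = m+2 by omega)]
    push_cast; ring
  rw [← W_eq_Q (m+2) (node x y), sum_treesOfSize_succ_succ]
  by_cases hxe : x = y
  · -- diagonal case
    subst hxe
    rw [if_pos rfl]
    have hsz : 2 * x.size = m + 2 := by omega
    have key : ∀ b ∈ Finset.Icc 1 (m+1), ∀ l ∈ treesOfSize b, ∀ r ∈ treesOfSize (m + 2 - b),
        pbst (node l r) * (if canon (node l r) = node x x then (1:ℝ) else 0) =
        1 / (m + 1 : ℝ) * ((pbst l * (if canon l = x then (1:ℝ) else 0)) *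
          (pbst r * (if canon r = x then (1:ℝ) else 0))) := by
      intro b hb l hl r hr
      rw [hpb b hb l hl r hr]
      have : (if canon (node l r) = node x x then (1:ℝ) else 0) =
          (if canon l = x then (1:ℝ) else 0) * (if canon r = x then (1:ℝ) else 0) := by
        rw [if_congr (hiff l r) rfl rfl]
        by_cases h1 : canon l = x <;> by_cases h2 : canon r = x <;> simp [h1, h2]
      rw [this]; ring
    rw [Finset.sum_congr rfl fun b hb => Finset.sum_congr rfl fun l hl =>
      Finset.sum_congr rfl fun r hr => key b hb l hl r hr]
    have inner : ∀ b ∈ Finset.Icc 1 (m+1),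
        (∑ l ∈ treesOfSize b, ∑ r ∈ treesOfSize (m + 2 - b),
          1 / (m + 1 : ℝ) * ((pbst l * (if canon l = x then (1:ℝ) else 0)) *
            (pbst r * (if canon r = x then (1:ℝ) else 0)))) =
        1 / (m + 1 : ℝ) * ((∑ l ∈ treesOfSize b, pbst l * (if canon l = x then (1:ℝ) else 0)) *
          (∑ r ∈ treesOfSize (m + 2 - b), pbst r * (if canon r = x then (1:ℝ) else 0))) := by
      intro b _
      rw [Finset.sum_mul_sum, Finset.mul_sum]
      refine Finset.sum_congr rfl fun l _ => ?_
      rw [Finset.mul_sum]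
    rw [Finset.sum_congr rfl inner]
    rw [Finset.sum_eq_single x.size]
    · rw [W_eq_Q, show m + 2 - x.size = x.size by omega, W_eq_Q]
    · intro b _ hbne
      rw [W_eq_zero (fun h => hbne h.symm)]
      ring
    · intro h
      exact absurd (Finset.mem_Icc.mpr ⟨ha1, ha2⟩) h
  · -- off-diagonal case
    rw [if_neg hxe]
    have hexy : y.size = m + 2 - x.size := by omega
    have key : ∀ b ∈ Finset.Icc 1 (m+1), ∀ l ∈ treesOfSize b, ∀ r ∈ treesOfSize (m + 2 - b),
        pbst (node l r) * (if canon (node l r) = node x y then (1:ℝ) else 0) =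
        1 / (m + 1 : ℝ) * ((pbst l * (if canon l = x then (1:ℝ) else 0)) *
          (pbst r * (if canon r = y then (1:ℝ) else 0))) +
        1 / (m + 1 : ℝ) * ((pbst l * (if canon l = y then (1:ℝ) else 0)) *
          (pbst r * (if canon r = x then (1:ℝ) else 0))) := by
      intro b hb l hl r hr
      rw [hpb b hb l hl r hr]
      have hsplit : (if canon (node l r) = node x y then (1:ℝ) else 0) =
          (if canon l = x then (1:ℝ) else 0) * (if canon r = y then (1:ℝ) else 0) +
          (if canon l = y then (1:ℝ) else 0) * (if canon r = x then (1:ℝ) else 0) := by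
        rw [if_congr (hiff l r) rfl rfl]
        by_cases h1 : canon l = x <;> by_cases h2 : canon l = y <;>
          by_cases h3 : canon r = x <;> by_cases h4 : canon r = y <;>
          (try simp [h1, h2, h3, h4]) <;> tauto
      rw [hsplit]; ring
    rw [Finset.sum_congr rfl fun b hb => Finset.sum_congr rfl fun l hl =>
      Finset.sum_congr rfl fun r hr => key b hb l hl r hr]
    have inner : ∀ b ∈ Finset.Icc 1 (m+1),
        (∑ l ∈ treesOfSize b, ∑ r ∈ treesOfSize (m + 2 - b),
          (1 / (m + 1 : ℝ) * ((pbst l * (if canon l = x then (1:ℝ) else 0)) *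
            (pbst r * (if canon r = y then (1:ℝ) else 0))) +
          1 / (m + 1 : ℝ) * ((pbst l * (if canon l = y then (1:ℝ) else 0)) *
            (pbst r * (if canon r = x then (1:ℝ) else 0))))) =
        1 / (m + 1 : ℝ) * ((∑ l ∈ treesOfSize b, pbst l * (if canon l = x then (1:ℝ) else 0)) *
          (∑ r ∈ treesOfSize (m + 2 - b), pbst r * (if canon r = y then (1:ℝ) else 0))) +
        1 / (m + 1 : ℝ) * ((∑ l ∈ treesOfSize b, pbst l * (if canon l = y then (1:ℝ) else 0)) *
          (∑ r ∈ treesOfSize (m + 2 - b), pbst r * (if canon r = x then (1:ℝ) else 0))) := by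
      intro b _
      rw [Finset.sum_congr rfl fun l _ => Finset.sum_add_distrib, Finset.sum_add_distrib]
      congr 1
      · rw [Finset.sum_mul_sum, Finset.mul_sum]
        refine Finset.sum_congr rfl fun l _ => ?_
        rw [Finset.mul_sum]
      · rw [Finset.sum_mul_sum, Finset.mul_sum]
        refine Finset.sum_congr rfl fun l _ => ?_
        rw [Finset.mul_sum]
    rw [Finset.sum_congr rfl inner, Finset.sum_add_distrib]
    have first : (∑ b ∈ Finset.Icc 1 (m+1),
        1 / (m + 1 : ℝ) * ((∑ l ∈ treesOfSize b, pbst l * (if canon l = x then (1:ℝ) else 0)) *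
          (∑ r ∈ treesOfSize (m + 2 - b), pbst r * (if canon r = y then (1:ℝ) else 0)))) =
        1 / (m + 1 : ℝ) * (Q x.size x * Q y.size y) := by
      rw [Finset.sum_eq_single x.size]
      · rw [W_eq_Q, show m + 2 - x.size = y.size by omega, W_eq_Q]
      · intro b _ hbne
        rw [W_eq_zero (fun h => hbne h.symm)]
        ring
      · intro h
        exact absurd (Finset.mem_Icc.mpr ⟨ha1, ha2⟩) h
    have second : (∑ b ∈ Finset.Icc 1 (m+1),
        1 / (m + 1 : ℝ) * ((∑ l ∈ treesOfSize b, pbst l * (if canon l = y then (1:ℝ) else 0)) *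
          (∑ r ∈ treesOfSize (m + 2 - b), pbst r * (if canon r = x then (1:ℝ) else 0)))) =
        1 / (m + 1 : ℝ) * (Q y.size y * Q x.size x) := by
      rw [Finset.sum_eq_single y.size]
      · rw [W_eq_Q, show m + 2 - y.size = x.size by omega, W_eq_Q]
      · intro b _ hbne
        rw [W_eq_zero (fun h => hbne h.symm)]
        ring
      · intro h
        exact absurd (Finset.mem_Icc.mpr ⟨by omega, by omega⟩) h
    rw [first, second]
    ring

lemma sum_Icc_reflect (m : ℕ) (g : ℕ → ℝ) :
    ∑ a ∈ Finset.Icc 1 (m+1), g a =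
      ((∑ a ∈ Finset.Icc 1 ((m+1)/2), g a) + ∑ a ∈ Finset.Icc 1 ((m+1)/2), g (m+2-a))
      + (if Even m then g ((m+2)/2) else 0) := by
  have eIcc : Finset.Icc 1 (m+1) = Finset.Ico 1 (m+2) := by
    rw [← Finset.Ico_add_one_right_eq_Icc]; rfl
  have eIcc2 : Finset.Icc 1 ((m+1)/2) = Finset.Ico 1 ((m+3)/2) := by
    rw [← Finset.Ico_add_one_right_eq_Icc]; congr 1; omega
  rw [eIcc, eIcc2,
    ← Finset.sum_Ico_consecutive g (show 1 ≤ (m+3)/2 by omega) (show (m+3)/2 ≤ m+2 by omega)]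
  by_cases hm : Even m
  · have h2 : m % 2 = 0 := Nat.even_iff.mp hm
    rw [if_pos hm]
    rw [Finset.sum_eq_sum_Ico_succ_bot (show (m+3)/2 < m+2 by omega) g]
    have hrefl : ∑ a ∈ Finset.Ico ((m+3)/2 + 1) (m+2), g a =
        ∑ a ∈ Finset.Ico 1 ((m+3)/2), g (m+2-a) := by
      refine Finset.sum_nbij' (fun a => m+2-a) (fun a => m+2-a) ?_ ?_ ?_ ?_ ?_
      · intro a ha; have := Finset.mem_Ico.mp ha; rw [Finset.mem_Ico]; omega
      · intro a ha; have := Finset.mem_Ico.mp ha; rw [Finset.mem_Ico]; omega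
      · intro a ha; have := Finset.mem_Ico.mp ha; omega
      · intro a ha; have := Finset.mem_Ico.mp ha; omega
      · intro a ha; have := Finset.mem_Ico.mp ha
        exact congrArg g (by omega)
    rw [hrefl, show (m+3)/2 = (m+2)/2 by omega]
    ring
  · have h2 : m % 2 = 1 := Nat.odd_iff.mp (Nat.not_even_iff_odd.mp hm)
    rw [if_neg hm, add_zero]
    have hrefl : ∑ a ∈ Finset.Ico ((m+3)/2) (m+2), g a =
        ∑ a ∈ Finset.Ico 1 ((m+3)/2), g (m+2-a) := by
      refine Finset.sum_nbij' (fun a => m+2-a) (fun a => m+2-a) ?_ ?_ ?_ ?_ ?_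
      · intro a ha; have := Finset.mem_Ico.mp ha; rw [Finset.mem_Ico]; omega
      · intro a ha; have := Finset.mem_Ico.mp ha; rw [Finset.mem_Ico]; omega
      · intro a ha; have := Finset.mem_Ico.mp ha; omega
      · intro a ha; have := Finset.mem_Ico.mp ha; omega
      · intro a ha; have := Finset.mem_Ico.mp ha
        exact congrArg g (by omega)
    rw [hrefl]

lemma sum_diag {α : Type*} [DecidableEq α] (s : Finset α) (f : α × α → ℝ) :
    ∑ p ∈ (s ×ˢ s).filter (fun p => p.1 = p.2), f p = ∑ x ∈ s, f (x, x) := by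
  refine Finset.sum_nbij' (fun p => p.1) (fun x => (x, x)) ?_ ?_ ?_ ?_ ?_
  · rintro ⟨u, v⟩ hp
    obtain ⟨hp1, hp2⟩ := Finset.mem_filter.mp hp
    exact (Finset.mem_product.mp hp1).1
  · intro x hx
    exact Finset.mem_filter.mpr ⟨Finset.mem_product.mpr ⟨hx, hx⟩, rfl⟩
  · rintro ⟨u, v⟩ hp
    obtain ⟨hp1, hp2⟩ := Finset.mem_filter.mp hp
    simp only at hp2 ⊢
    rw [hp2]
  · intro x _; rfl
  · rintro ⟨u, v⟩ hp
    obtain ⟨hp1, hp2⟩ := Finset.mem_filter.mp hp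
    simp only at hp2 ⊢
    rw [hp2]

/-- product factorization -/
lemma sum_prod_factor (s t : Finset BT) (c : ℝ) (f g : BT → ℝ) :
    ∑ p ∈ s ×ˢ t, c * (f p.1 * g p.2) = c * ((∑ x ∈ s, f x) * ∑ y ∈ t, g y) := by
  rw [Finset.sum_product, Finset.sum_mul_sum, Finset.mul_sum]
  refine Finset.sum_congr rfl fun x _ => ?_
  rw [Finset.mul_sum]

lemma ne_of_mem_Cl_ne {a b : ℕ} {x y : BT} (hx : x ∈ Cl a) (hy : y ∈ Cl b)
    (hab : a ≠ b) : x ≠ y := by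
  intro h
  exact hab ((size_of_mem_Cl hx).symm.trans (h ▸ size_of_mem_Cl hy))

lemma R_rec (m N : ℕ) (hN : 1 ≤ N) :
    R (m+2) N = (∑ a ∈ Finset.Icc 1 ((m+1)/2),
        (2 / (m+1:ℝ))^N * R a N * R (m+2-a) N)
      + (if Even m then (1:ℝ) else 0) * ((1/(m+1:ℝ))^N *
         ((2:ℝ)^(N-1) * (R ((m+2)/2) N)^2 - ((2:ℝ)^(N-1) - 1) * R ((m+2)/2) (2*N))) := by
  classical
  set g : ℕ → ℝ := fun a =>
    ∑ p ∈ ((Cl a ×ˢ Cl (m+2-a)).filter fun p => encode p.1 ≤ encode p.2),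
      (Q (m+2) (node p.1 p.2))^N with hg
  have step1 : R (m+2) N = ∑ a ∈ Finset.Icc 1 (m+1), g a := by
    rw [R, Cl_succ_succ]
    rw [Finset.sum_image]
    · rw [Finset.sum_biUnion]
      intro a ha b hb hab
      simp only [Finset.disjoint_left]
      intro p hp hp'
      obtain ⟨hp1, _⟩ := Finset.mem_filter.mp hp
      obtain ⟨hp1', _⟩ := Finset.mem_filter.mp hp'
      exact (ne_of_mem_Cl_ne (Finset.mem_product.mp hp1).1
        (Finset.mem_product.mp hp1').1 hab) rfl
    · rintro ⟨x, y⟩ - ⟨x', y'⟩ - h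
      injection h with h1 h2
      exact Prod.ext h1 h2
  rw [step1, sum_Icc_reflect m g, ← Finset.sum_add_distrib]
  congr 1
  · -- paired terms
    refine Finset.sum_congr rfl fun a ha => ?_
    obtain ⟨ha1, ha2⟩ := Finset.mem_Icc.mp ha
    have h2a : 2 * a ≤ m + 1 := by omega
    have hb1 : 1 ≤ m + 2 - a := by omega
    have hrev : m + 2 - (m + 2 - a) = a := by omega
    -- rewrite g a
    have gaEq : g a = ∑ p ∈ ((Cl a ×ˢ Cl (m+2-a)).filter fun p => encode p.1 ≤ encode p.2),
        (2/(m+1:ℝ))^N * ((Q a p.1)^N * (Q (m+2-a) p.2)^N) := by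
      rw [hg]
      refine Finset.sum_congr rfl fun p hp => ?_
      obtain ⟨hprod, hle⟩ := Finset.mem_filter.mp hp
      obtain ⟨hp1, hp2⟩ := Finset.mem_product.mp hprod
      have e1 := size_of_mem_Cl hp1
      have e2 := size_of_mem_Cl hp2
      rw [Q_node m p.1 p.2 (canon_of_mem_Cl hp1) (canon_of_mem_Cl hp2) hle
        (by omega) (by omega) (by omega)]
      rw [if_neg (ne_of_mem_Cl_ne hp1 hp2 (by omega)), e1, e2, mul_pow, mul_pow]
    have gbEq : g (m+2-a) =
        ∑ p ∈ ((Cl a ×ˢ Cl (m+2-a)).filter fun p => ¬ encode p.1 ≤ encode p.2),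
        (2/(m+1:ℝ))^N * ((Q a p.1)^N * (Q (m+2-a) p.2)^N) := by
      rw [hg]
      simp only [hrev]
      refine Finset.sum_nbij' (fun p => (p.2, p.1)) (fun p => (p.2, p.1)) ?_ ?_ ?_ ?_ ?_
      · rintro ⟨x, y⟩ hp
        obtain ⟨hprod, hle⟩ := Finset.mem_filter.mp hp
        obtain ⟨hp1, hp2⟩ := Finset.mem_product.mp hprod
        refine Finset.mem_filter.mpr ⟨Finset.mem_product.mpr ⟨hp2, hp1⟩, ?_⟩
        dsimp only at hle ⊢
        intro hle'
        exact (ne_of_mem_Cl_ne hp1 hp2 (by omega))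
          (encode_injective (le_antisymm hle hle'))
      · rintro ⟨x, y⟩ hp
        obtain ⟨hprod, hle⟩ := Finset.mem_filter.mp hp
        obtain ⟨hp1, hp2⟩ := Finset.mem_product.mp hprod
        refine Finset.mem_filter.mpr ⟨Finset.mem_product.mpr ⟨hp2, hp1⟩, ?_⟩
        dsimp only at hle ⊢
        omega
      · rintro ⟨x, y⟩ _; rfl
      · rintro ⟨x, y⟩ _; rfl
      · rintro ⟨x, y⟩ hp
        obtain ⟨hprod, hle⟩ := Finset.mem_filter.mp hp
        obtain ⟨hp1, hp2⟩ := Finset.mem_product.mp hprod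
        have e1 := size_of_mem_Cl hp1
        have e2 := size_of_mem_Cl hp2
        dsimp only at hle e1 e2 hp1 hp2 ⊢
        rw [Q_node m x y (canon_of_mem_Cl hp1) (canon_of_mem_Cl hp2) hle
          (by omega) (by omega) (by omega)]
        rw [if_neg (ne_of_mem_Cl_ne hp1 hp2 (by omega)), e1, e2, mul_pow, mul_pow]
        ring
    rw [gaEq, gbEq, Finset.sum_filter_add_sum_filter_not,
      sum_prod_factor (Cl a) (Cl (m+2-a)) ((2/(m+1:ℝ))^N)
        (fun x => (Q a x)^N) (fun y => (Q (m+2-a) y)^N)]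
    rw [R, R]
    ring
  · -- middle term
    by_cases hm : Even m
    · rw [if_pos hm, if_pos hm, one_mul]
      have hpar : m % 2 = 0 := Nat.even_iff.mp hm
      set hh := (m+2)/2 with hhd
      have hrev : m + 2 - hh = hh := by omega
      have gEq : g hh = ∑ p ∈ ((Cl hh ×ˢ Cl hh).filter fun p => encode p.1 ≤ encode p.2),
          ((if p.1 = p.2 then (1:ℝ) else 2)/(m+1:ℝ) * (Q hh p.1 * Q hh p.2))^N := by
        rw [hg]
        simp only [hrev]
        refine Finset.sum_congr rfl fun p hp => ?_
        obtain ⟨hprod, hle⟩ := Finset.mem_filter.mp hp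
        obtain ⟨hp1, hp2⟩ := Finset.mem_product.mp hprod
        have e1 := size_of_mem_Cl hp1
        have e2 := size_of_mem_Cl hp2
        rw [Q_node m p.1 p.2 (canon_of_mem_Cl hp1) (canon_of_mem_Cl hp2) hle
          (by omega) (by omega) (by omega), e1, e2]
      rw [gEq]
      -- split into diagonal and off-diagonal
      rw [← Finset.sum_filter_add_sum_filter_not
        (((Cl hh ×ˢ Cl hh).filter fun p => encode p.1 ≤ encode p.2))
        (fun p => p.1 = p.2)]
      have hdiagset : (((Cl hh ×ˢ Cl hh).filter fun p => encode p.1 ≤ encode p.2).filter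
          fun p => p.1 = p.2) = (Cl hh ×ˢ Cl hh).filter fun p => p.1 = p.2 := by
        rw [Finset.filter_filter]
        refine Finset.filter_congr fun p _ => ?_
        constructor
        · exact And.right
        · intro h; exact ⟨h ▸ le_refl _, h⟩
      have hdiag : ∀ (c : ℝ), ∑ p ∈ (Cl hh ×ˢ Cl hh).filter (fun p => p.1 = p.2),
          (c * (Q hh p.1 * Q hh p.2))^N = c^N * R hh (2*N) := by
        intro c
        rw [sum_diag (Cl hh) (fun p => (c * (Q hh p.1 * Q hh p.2))^N)]
        rw [R, Finset.mul_sum]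
        refine Finset.sum_congr rfl fun x _ => ?_
        rw [mul_pow, ← sq (Q hh x), ← pow_mul]
      have hoffval : ∀ p ∈ (((Cl hh ×ˢ Cl hh).filter fun p => encode p.1 ≤ encode p.2).filter
          fun p => ¬ p.1 = p.2),
          ((if p.1 = p.2 then (1:ℝ) else 2)/(m+1:ℝ) * (Q hh p.1 * Q hh p.2))^N =
          ((2:ℝ)/(m+1:ℝ) * (Q hh p.1 * Q hh p.2))^N := by
        intro p hp
        rw [if_neg (Finset.mem_filter.mp hp).2]
      have hdiagval : ∀ p ∈ (((Cl hh ×ˢ Cl hh).filter fun p => encode p.1 ≤ encode p.2).filter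
          fun p => p.1 = p.2),
          ((if p.1 = p.2 then (1:ℝ) else 2)/(m+1:ℝ) * (Q hh p.1 * Q hh p.2))^N =
          ((1:ℝ)/(m+1:ℝ) * (Q hh p.1 * Q hh p.2))^N := by
        intro p hp
        rw [if_pos (Finset.mem_filter.mp hp).2]
      rw [Finset.sum_congr rfl hdiagval, Finset.sum_congr rfl hoffval]
      rw [Finset.sum_congr hdiagset (fun _ _ => rfl), hdiag]
      -- off-diagonal: twice it equals full minus diagonal
      have hsplit : ∑ p ∈ ((Cl hh ×ˢ Cl hh).filter fun p => ¬ p.1 = p.2),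
          ((2:ℝ)/(m+1:ℝ) * (Q hh p.1 * Q hh p.2))^N =
          2 * ∑ p ∈ (((Cl hh ×ˢ Cl hh).filter fun p => encode p.1 ≤ encode p.2).filter
            fun p => ¬ p.1 = p.2),
          ((2:ℝ)/(m+1:ℝ) * (Q hh p.1 * Q hh p.2))^N := by
        have e1 : (((Cl hh ×ˢ Cl hh).filter fun p => encode p.1 ≤ encode p.2).filter
            fun p => ¬ p.1 = p.2) =
            ((Cl hh ×ˢ Cl hh).filter fun p => ¬ p.1 = p.2).filter
            fun p => encode p.1 ≤ encode p.2 := by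
          rw [Finset.filter_filter, Finset.filter_filter]
          exact Finset.filter_congr fun p _ => by tauto
        rw [e1]
        rw [← Finset.sum_filter_add_sum_filter_not
          ((Cl hh ×ˢ Cl hh).filter fun p => ¬ p.1 = p.2)
          (fun p => encode p.1 ≤ encode p.2)]
        have e2 : ∑ p ∈ (((Cl hh ×ˢ Cl hh).filter fun p => ¬ p.1 = p.2).filter
            fun p => ¬ encode p.1 ≤ encode p.2),
            ((2:ℝ)/(m+1:ℝ) * (Q hh p.1 * Q hh p.2))^N =
            ∑ p ∈ (((Cl hh ×ˢ Cl hh).filter fun p => ¬ p.1 = p.2).filter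
            fun p => encode p.1 ≤ encode p.2),
            ((2:ℝ)/(m+1:ℝ) * (Q hh p.1 * Q hh p.2))^N := by
          refine Finset.sum_nbij' (fun p => (p.2, p.1)) (fun p => (p.2, p.1)) ?_ ?_ ?_ ?_ ?_
          · rintro ⟨x, y⟩ hp
            obtain ⟨hpf, hle⟩ := Finset.mem_filter.mp hp
            obtain ⟨hprod, hne⟩ := Finset.mem_filter.mp hpf
            obtain ⟨hp1, hp2⟩ := Finset.mem_product.mp hprod
            dsimp only at hle hne ⊢
            refine Finset.mem_filter.mpr ⟨Finset.mem_filter.mpr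
              ⟨Finset.mem_product.mpr ⟨hp2, hp1⟩, ?_⟩, ?_⟩
            · dsimp only; intro h; exact hne h.symm
            · dsimp only; omega
          · rintro ⟨x, y⟩ hp
            obtain ⟨hpf, hle⟩ := Finset.mem_filter.mp hp
            obtain ⟨hprod, hne⟩ := Finset.mem_filter.mp hpf
            obtain ⟨hp1, hp2⟩ := Finset.mem_product.mp hprod
            dsimp only at hle hne ⊢
            refine Finset.mem_filter.mpr ⟨Finset.mem_filter.mpr
              ⟨Finset.mem_product.mpr ⟨hp2, hp1⟩, ?_⟩, ?_⟩
            · dsimp only; intro h; exact hne h.symm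
            · dsimp only
              intro h
              exact hne (encode_injective (le_antisymm hle h))
          · rintro ⟨x, y⟩ _; rfl
          · rintro ⟨x, y⟩ _; rfl
          · rintro ⟨x, y⟩ _; dsimp only; ring
        rw [e2]
        ring
      -- also: full sum and diagonal with coefficient 2
      have hfull : ∑ p ∈ (Cl hh ×ˢ Cl hh),
          ((2:ℝ)/(m+1:ℝ) * (Q hh p.1 * Q hh p.2))^N =
          ((2:ℝ)/(m+1:ℝ))^N * (R hh N * R hh N) := by
        have : ∀ p : BT × BT, ((2:ℝ)/(m+1:ℝ) * (Q hh p.1 * Q hh p.2))^N =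
            ((2:ℝ)/(m+1:ℝ))^N * ((Q hh p.1)^N * (Q hh p.2)^N) := by
          intro p; rw [mul_pow, mul_pow]
        rw [Finset.sum_congr rfl fun p _ => this p,
          sum_prod_factor (Cl hh) (Cl hh) (((2:ℝ)/(m+1:ℝ))^N)
            (fun x => (Q hh x)^N) (fun y => (Q hh y)^N)]
        rw [R]
      have hoffdiag : ∑ p ∈ ((Cl hh ×ˢ Cl hh).filter fun p => ¬ p.1 = p.2),
          ((2:ℝ)/(m+1:ℝ) * (Q hh p.1 * Q hh p.2))^N =
          ((2:ℝ)/(m+1:ℝ))^N * (R hh N * R hh N) - ((2:ℝ)/(m+1:ℝ))^N * R hh (2*N) := by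
        have := Finset.sum_filter_add_sum_filter_not (Cl hh ×ˢ Cl hh)
          (fun p => p.1 = p.2)
          (fun p => ((2:ℝ)/(m+1:ℝ) * (Q hh p.1 * Q hh p.2))^N)
        rw [hdiag ((2:ℝ)/(m+1:ℝ))] at this
        linarith
      have hBval := hsplit.symm.trans hoffdiag
      -- now finish with algebra
      have hpow : (2:ℝ)^N = 2 * 2^(N-1) := by
        rw [← pow_succ']
        congr 1
        omega
      have hcoef : ((2:ℝ)/(m+1:ℝ))^N = 2^N * ((1:ℝ)/(m+1:ℝ))^N := by
        rw [div_pow, div_pow]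
        ring
      rw [hcoef, hpow] at hBval
      rw [sq]
      linear_combination (1/2 : ℝ) * hBval
    · rw [if_neg hm, if_neg hm, zero_mul]
  done

end BT

open BT in
theorem PisoPow_recurrence :
    (∀ r : ℕ, 1 ≤ r → ∀ k ∈ ({1, 2, 3} : Finset ℕ), PisoPow k r = 1) ∧
    (∀ k r : ℕ, 4 ≤ k → 1 ≤ r →
      PisoPow k r =
        (∑ i ∈ Finset.Icc 1 ((k - 1) / 2),
          ((2 : ℝ) / ((k : ℝ) - 1)) ^ (2 ^ r) * PisoPow i r * PisoPow (k - i) r)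
        + (if Even k then (1 : ℝ) else 0) * ((1 : ℝ) / ((k : ℝ) - 1)) ^ (2 ^ r) *
            ((2 : ℝ) ^ (2 ^ r - 1) * (PisoPow (k / 2) r) ^ 2
              - ((2 : ℝ) ^ (2 ^ r - 1) - 1) * PisoPow (k / 2) (r + 1))) := by
  constructor
  · intro r _ k hk
    simp only [Finset.mem_insert, Finset.mem_singleton] at hk
    rcases hk with rfl | rfl | rfl
    · exact PisoPow_small 1 r (by norm_num) (by norm_num)
    · exact PisoPow_small 2 r (by norm_num) (by norm_num)
    · exact PisoPow_small 3 r (by norm_num) (by norm_num)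
  · intro k r hk hr
    obtain ⟨m, rfl⟩ : ∃ m, k = m + 2 := ⟨k - 2, by omega⟩
    have hN : 1 ≤ 2 ^ r := Nat.one_le_two_pow
    rw [PisoPow_eq_R, R_rec m (2 ^ r) hN]
    simp only [PisoPow_eq_R]
    have e1 : m + 2 - 1 = m + 1 := rfl
    have e2 : Even (m + 2) ↔ Even m := by
      rw [Nat.even_iff, Nat.even_iff]; omega
    have e3 : (2:ℕ) ^ (r + 1) = 2 * 2 ^ r := by rw [pow_succ, Nat.mul_comm]
    rw [e1, if_congr e2 rfl rfl, e3]
    push_cast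
    ring_nf
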